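/- arXiv:2411.04791 — 2 statements merged into one kernel-verified Lean document; each statement's English description precedes it below -/
import Mathlib

section
/- Let K > 0 and let ρ̄ᴴ : ℝ² → ℝ. Suppose ρᴴ : ℝ² × ℝ → ℝ and u : ℝ² × ℝ → ℝ² are such that for every t ≥ 0 the map x ↦ ρᴴ(x,t)u(x,t) is differentiable, for every x the map t ↦ ρᴴ(x,t) is differentiable, and the continuity equation ∂ₜρᴴ(x,t) + div_x(ρᴴ(·,t)u(·,t))(x) = 0 holds together with the control condition div_x(ρᴴ(·,t)u(·,t))(x) = -K·(ρ̄ᴴ(x) - ρᴴ(x,t)) for all x ∈ ℝ² and t ≥ 0. Then the herders' density error eᴴ(x,t) = ρ̄ᴴ(x) - ρᴴ(x,t) satisfies eᴴ(x,t) = eᴴ(x,0)·exp(-K t) for all x ∈ ℝ² and t ≥ 0; in particular eᴴ(x,t) → 0 as t → ∞ for every x. -/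
open MeasureTheory Real Filter

noncomputable section

/-- The plane `ℝ²`, modeled as functions `Fin 2 → ℝ`. -/
abbrev Vec2 := Fin 2 → ℝ

/-- Partial derivative of a scalar field in the `i`-th coordinate direction. -/
def pderiv2 (i : Fin 2) (f : Vec2 → ℝ) (x : Vec2) : ℝ :=
  fderiv ℝ f x (Pi.single i 1)

/-- Divergence of a vector field on `ℝ²` (trace of the Fréchet derivative). -/
def div2 (F : Vec2 → Vec2) (x : Vec2) : ℝ :=
  ∑ i, fderiv ℝ F x (Pi.single i 1) i

/-- Gradient of a scalar field on `ℝ²`. -/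
def grad2 (f : Vec2 → ℝ) (x : Vec2) : Vec2 :=
  fun i => pderiv2 i f x

/-- Laplacian of a scalar field on `ℝ²`. -/
def lap2 (f : Vec2 → ℝ) (x : Vec2) : ℝ :=
  ∑ i, pderiv2 i (pderiv2 i f) x

/-- `2π`-periodicity in both coordinates: `g (x + 2πk) = g x` for all `k ∈ ℤ²`. -/
def Per2 {E : Type*} (g : Vec2 → E) : Prop :=
  ∀ (x : Vec2) (k : Fin 2 → ℤ), g (x + fun i => 2 * π * (k i : ℝ)) = g x

/-- The periodic square `Ω = [-π, π]²`. -/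
def Omega2 : Set Vec2 := Set.Icc (fun _ => -π) (fun _ => π)

/-- Herders' global exponential convergence.
Under the continuity equation together with the control condition
`∇·(ρᴴu) = -K (ρ̄ᴴ - ρᴴ)`, the herders' density error `eᴴ(x,t) = ρ̄ᴴ(x) - ρᴴ(x,t)`
satisfies `eᴴ(x,t) = eᴴ(x,0) e^{-Kt}` for `t ≥ 0`, and hence tends to `0` pointwise. -/
theorem herders_global_exponential_convergence
    (K : ℝ) (hK : 0 < K) (ρbar : Vec2 → ℝ)
    (ρ : Vec2 → ℝ → ℝ) (u : Vec2 → ℝ → Vec2)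
    (hflux : ∀ t : ℝ, 0 ≤ t → Differentiable ℝ (fun x => ρ x t • u x t))
    (hρt : ∀ x : Vec2, Differentiable ℝ (ρ x))
    (hcont : ∀ (x : Vec2) (t : ℝ), 0 ≤ t →
      deriv (ρ x) t + div2 (fun y => ρ y t • u y t) x = 0)
    (hctrl : ∀ (x : Vec2) (t : ℝ), 0 ≤ t →
      div2 (fun y => ρ y t • u y t) x = -K * (ρbar x - ρ x t)) :
    (∀ (x : Vec2) (t : ℝ), 0 ≤ t →
      ρbar x - ρ x t = (ρbar x - ρ x 0) * Real.exp (-K * t)) ∧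
    (∀ x : Vec2, Tendsto (fun t => ρbar x - ρ x t) atTop (nhds 0)) := by
  have key : ∀ (x : Vec2) (t : ℝ), 0 ≤ t →
      ρbar x - ρ x t = (ρbar x - ρ x 0) * Real.exp (-K * t) := by
    intro x t ht
    set g : ℝ → ℝ := fun s => (ρbar x - ρ x s) * Real.exp (K * s) with hg
    have hderiv : ∀ s ∈ Set.Ico (0:ℝ) t, HasDerivWithinAt g 0 (Set.Ici s) s := by
      intro s hs
      have hs0 : 0 ≤ s := hs.1
      have hρ' : deriv (ρ x) s = K * (ρbar x - ρ x s) := by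
        have h1 := hcont x s hs0
        have h2 := hctrl x s hs0
        rw [h2] at h1; linarith
      have h3 : HasDerivAt (ρ x) (K * (ρbar x - ρ x s)) s := by
        rw [← hρ']; exact (hρt x s).hasDerivAt
      have h4 : HasDerivAt (fun s => ρbar x - ρ x s) (-(K * (ρbar x - ρ x s))) s := by
        exact ((hasDerivAt_const s (ρbar x)).sub h3).congr_deriv (by ring)
      have h5 : HasDerivAt (fun s => Real.exp (K * s)) (K * Real.exp (K * s)) s := by
        have := (Real.hasDerivAt_exp (K * s)).comp s
          ((hasDerivAt_id s).const_mul K)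
        exact this.congr_deriv (by ring)
      have h6 := h4.mul h5
      have : (-(K * (ρbar x - ρ x s))) * Real.exp (K * s)
          + (ρbar x - ρ x s) * (K * Real.exp (K * s)) = 0 := by ring
      rw [this] at h6
      exact h6.hasDerivWithinAt
    have hcontOn : ContinuousOn g (Set.Icc 0 t) := by
      apply Continuous.continuousOn
      exact ((continuous_const.sub (hρt x).continuous).mul
        (Real.continuous_exp.comp (continuous_const.mul continuous_id)))
    have := constant_of_has_deriv_right_zero hcontOn hderiv t (Set.mem_Icc.2 ⟨ht, le_refl t⟩)
    have hg0 : g 0 = ρbar x - ρ x 0 := by simp [hg]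
    have hgt : (ρbar x - ρ x t) * Real.exp (K * t) = ρbar x - ρ x 0 := by
      rw [← hg0]; exact this
    have hexp : Real.exp (K * t) ≠ 0 := Real.exp_ne_zero _
    field_simp [Real.exp_neg, neg_mul] at *
    rw [← hgt, mul_assoc, ← Real.exp_add]; simp
  refine ⟨key, fun x => ?_⟩
  have h0 : Tendsto (fun t : ℝ => (ρbar x - ρ x 0) * Real.exp (-K * t)) atTop (nhds 0) := by
    have : Tendsto (fun t : ℝ => Real.exp (-K * t)) atTop (nhds 0) := by
      have h1 : Tendsto (fun t : ℝ => K * t) atTop atTop :=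
        tendsto_id.const_mul_atTop hK
      have h2 : Tendsto (fun t : ℝ => -(K * t)) atTop atBot :=
        tendsto_neg_atBot_iff.2 h1
      exact (Real.tendsto_exp_atBot.comp h2).congr (fun t => by simp [neg_mul])
    simpa using this.const_mul (ρbar x - ρ x 0)
  apply h0.congr'
  filter_upwards [eventually_ge_atTop (0:ℝ)] with t ht
  exact (key x t ht).symm
end
end

section
/- Let Ω = [-π,π]² ⊂ ℝ². Let e : ℝ² → ℝ be continuously differentiable and 2π-periodic with zero mean, i.e. ∫_Ω e(x) dx = 0. Then ∫_Ω ‖∇e(x)‖² dx ≥ ∫_Ω e(x)² dx. -/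
open MeasureTheory Real Filter

noncomputable section

open Complex

/-- Parseval for continuous functions on the circle, plus summability. -/
lemma parseval_cont {T : ℝ} [hT : Fact (0 < T)] (g : C(AddCircle T, ℂ)) :
    Summable (fun n : ℤ => ‖fourierCoeff (⇑g) n‖ ^ 2) ∧
    ∑' n : ℤ, ‖fourierCoeff (⇑g) n‖ ^ 2 = ∫ t : AddCircle T, ‖g t‖ ^ 2 ∂AddCircle.haarAddCircle := by
  set F := ContinuousMap.toLp (E := ℂ) 2 AddCircle.haarAddCircle ℂ g with hF
  have hrepr : ∀ n, ‖fourierCoeff (⇑g) n‖ = ‖fourierBasis.repr F n‖ := by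
    intro n
    rw [fourierBasis_repr, fourierCoeff_toLp]
  constructor
  · have hmem := lp.memℓp (fourierBasis.repr F)
    have hsum := (memℓp_gen_iff (p := 2) (by norm_num) (f := ⇑(fourierBasis.repr F))).1 hmem
    have : Summable fun n : ℤ => ‖fourierBasis.repr F n‖ ^ 2 := by
      convert hsum using 2 with n
      rw [ENNReal.toReal_ofNat, Real.rpow_two]
    exact this.congr (fun n => by rw [hrepr n])
  · have h1 := tsum_sq_fourierCoeff F
    have h2 : ∀ n, fourierCoeff (⇑F) n = fourierCoeff (⇑g) n := fun n => fourierCoeff_toLp g n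
    rw [show (fun n : ℤ => ‖fourierCoeff (⇑g) n‖ ^ 2) = fun n => ‖fourierCoeff (⇑F) n‖ ^ 2 by
      funext n; rw [h2]]
    rw [h1]
    apply integral_congr_ae
    filter_upwards [ContinuousMap.coeFn_toLp (p := 2) AddCircle.haarAddCircle (𝕜 := ℂ) g] with t ht
    rw [ht]

section Lift
variable {T : ℝ} [hT : Fact (0 < T)]

/-- Lift of a continuous periodic function to the circle, as a continuous map. -/
def perLift {f : ℝ → ℂ} (hp : Function.Periodic f T) (hc : Continuous f) :
    C(AddCircle T, ℂ) :=
  ⟨hp.lift, hc.quotient_liftOn' (fun a b h => by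
    have h2 : -a + b ∈ AddSubgroup.zmultiples T := QuotientAddGroup.leftRel_apply.mp h
    obtain ⟨k, hk⟩ := h2
    have hb : b = a + k • T := by
      have : k • T = -a + b := hk
      linarith [this]
    rw [hb]
    exact ((hp.zsmul k) a).symm)⟩

end Lift

lemma fourierCoeff_perLift {T : ℝ} [hT : Fact (0 < T)] {f : ℝ → ℂ}
    (hp : Function.Periodic f T) (hc : Continuous f) (n : ℤ) (a : ℝ) :
    fourierCoeff (⇑(perLift hp hc)) n
      = (1 / T) • ∫ x in a..a+T, fourier (-n) (x : AddCircle T) • f x := by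
  rw [fourierCoeff_eq_intervalIntegral _ n a]
  congr 1

/-- derivative of a periodic function is periodic -/
lemma periodic_deriv' {f f' : ℝ → ℝ} (hf : ∀ x, HasDerivAt f (f' x) x)
    (hper : Function.Periodic f (2 * π)) : Function.Periodic f' (2 * π) := by
  intro x
  have h1 : HasDerivAt (fun y => f (y + 2 * π)) (f' (x + 2 * π) * 1) x :=
    (hf (x + 2 * π)).comp x ((hasDerivAt_id x).add_const (2 * π))
  have h2 : (fun y => f (y + 2 * π)) = f := funext fun y => hper y
  rw [h2, mul_one] at h1
  exact h1.unique (hf x)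

lemma circle_integral_eq {f : ℝ → ℂ} (hp : Function.Periodic f (2 * π)) (hc : Continuous f) :
    haveI : Fact (0 < 2 * π) := ⟨by positivity⟩
    ∫ x in (-π)..π, ‖f x‖ ^ 2
      = (2 * π) * ∫ t : AddCircle (2 * π), ‖(perLift hp hc) t‖ ^ 2 ∂AddCircle.haarAddCircle := by
  haveI : Fact (0 < 2 * π) := ⟨by positivity⟩
  have h1 : ∫ x in (-π)..(-π + 2 * π), ‖(perLift hp hc) (x : AddCircle (2 * π))‖ ^ 2
      = ∫ t : AddCircle (2 * π), ‖(perLift hp hc) t‖ ^ 2 := by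
    exact AddCircle.intervalIntegral_preimage (2 * π) (-π) (fun t => ‖(perLift hp hc) t‖ ^ 2)
  have h2 : ∀ x : ℝ, (perLift hp hc) (x : AddCircle (2 * π)) = f x := fun x => hp.lift_coe x
  rw [show -π + 2 * π = π from by ring] at h1
  rw [show (∫ x in (-π)..π, ‖f x‖ ^ 2)
      = ∫ x in (-π)..π, ‖(perLift hp hc) (x : AddCircle (2 * π))‖ ^ 2 from by
    apply intervalIntegral.integral_congr; intro x _; simp [h2 x], h1,
    AddCircle.volume_eq_smul_haarAddCircle, integral_smul_measure,
    ENNReal.toReal_ofReal (by positivity : (0:ℝ) ≤ 2 * π), smul_eq_mul]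

lemma wirtinger1d {f f' : ℝ → ℝ} (hf : ∀ x, HasDerivAt f (f' x) x)
    (hf'c : Continuous f') (hper : Function.Periodic f (2 * π))
    (hmean : ∫ x in (-π)..π, f x = 0) :
    ∫ x in (-π)..π, f x ^ 2 ≤ ∫ x in (-π)..π, f' x ^ 2 := by
  haveI hT : Fact (0 < 2 * π) := ⟨by positivity⟩
  have hfc : Continuous f := by
    rw [continuous_iff_continuousAt]; exact fun x => (hf x).continuousAt
  have hper' := periodic_deriv' hf hper
  set F : ℝ → ℂ := fun x => (f x : ℂ) with hFdef
  set F' : ℝ → ℂ := fun x => (f' x : ℂ) with hF'def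
  have hFc : Continuous F := Complex.continuous_ofReal.comp hfc
  have hF'c : Continuous F' := Complex.continuous_ofReal.comp hf'c
  have hpF : Function.Periodic F (2 * π) := fun x => by simp only [hFdef]; rw [hper x]
  have hpF' : Function.Periodic F' (2 * π) := fun x => by simp only [hF'def]; rw [hper' x]
  set g := perLift hpF hFc with hg
  set g' := perLift hpF' hF'c with hg'
  have hco : ∀ n : ℤ, fourierCoeff (⇑g) n
      = (1 / (2 * π)) • ∫ x in (-π)..π, fourier (-n) (x : AddCircle (2 * π)) • F x := by
    intro n
    rw [hg, fourierCoeff_perLift hpF hFc n (-π), show -π + 2 * π = π from by ring]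
  have hco' : ∀ n : ℤ, fourierCoeff (⇑g') n
      = (1 / (2 * π)) • ∫ x in (-π)..π, fourier (-n) (x : AddCircle (2 * π)) • F' x := by
    intro n
    rw [hg', fourierCoeff_perLift hpF' hF'c n (-π), show -π + 2 * π = π from by ring]
  -- boundary values agree
  have hcoe : ((π : ℝ) : AddCircle (2 * π)) = ((-π : ℝ) : AddCircle (2 * π)) := by
    have h := AddCircle.coe_add_period (2 * π) (-π)
    rw [show -π + 2 * π = π from by ring] at h
    exact h
  have hFb : F π = F (-π) := by
    have h := hpF (-π)
    rw [show -π + 2 * π = π from by ring] at h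
    exact h
  -- integration by parts: coefficient relation
  have key : ∀ n : ℤ, fourierCoeff (⇑g') n = (Complex.I * n) * fourierCoeff (⇑g) n := by
    intro n
    have hG : ∀ x : ℝ, HasDerivAt (fun y : ℝ => fourier (-n) (y : AddCircle (2 * π)) * F y)
        ((-2 * π * Complex.I * n / ((2 * π : ℝ) : ℂ) * fourier (-n) (x : AddCircle (2 * π))) * F x
          + fourier (-n) (x : AddCircle (2 * π)) * F' x) x := by
      intro x
      exact (hasDerivAt_fourier_neg (2 * π) n x).mul (hf x).ofReal_comp
    have hcont1 : Continuous fun x : ℝ => fourier (-n) (x : AddCircle (2 * π)) :=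
      (map_continuous (fourier (-n))).comp (AddCircle.continuous_mk' (2 * π))
    have hint := intervalIntegral.integral_eq_sub_of_hasDerivAt
      (f := fun y : ℝ => fourier (-n) (y : AddCircle (2 * π)) * F y)
      (a := -π) (b := π) (fun x _ => hG x)
      (Continuous.intervalIntegrable (by
        exact ((continuous_const.mul hcont1).mul hFc).add (hcont1.mul hF'c)) _ _)
    simp only [hcoe, hFb, sub_self] at hint
    have hsplit : (∫ x in (-π)..π,
          ((-2 * π * Complex.I * n / ((2 * π : ℝ) : ℂ) * fourier (-n) (x : AddCircle (2 * π))) * F x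
            + fourier (-n) (x : AddCircle (2 * π)) * F' x))
        = (-2 * π * Complex.I * n / ((2 * π : ℝ) : ℂ)) • (∫ x in (-π)..π,
              fourier (-n) (x : AddCircle (2 * π)) * F x)
          + ∫ x in (-π)..π, fourier (-n) (x : AddCircle (2 * π)) * F' x := by
      rw [intervalIntegral.integral_add
          (f := fun x => (-2 * π * Complex.I * n / ((2 * π : ℝ) : ℂ) * fourier (-n) (x : AddCircle (2 * π))) * F x)
          (g := fun x => fourier (-n) (x : AddCircle (2 * π)) * F' x)
          (((continuous_const.mul hcont1).mul hFc).intervalIntegrable _ _)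
          ((hcont1.mul hF'c).intervalIntegrable _ _)]
      congr 1
      rw [← intervalIntegral.integral_smul]
      apply intervalIntegral.integral_congr
      intro x _
      simp [smul_eq_mul]; ring
    rw [hsplit] at hint
    have hIF' : (∫ x in (-π)..π, fourier (-n) (x : AddCircle (2 * π)) * F' x)
        = (Complex.I * n) * ∫ x in (-π)..π, fourier (-n) (x : AddCircle (2 * π)) * F x := by
      have h2π : ((2 * π : ℝ) : ℂ) ≠ 0 := Complex.ofReal_ne_zero.mpr (by positivity)
      have hconst : (-2 * (π:ℂ) * Complex.I * n / ((2 * π : ℝ) : ℂ)) = -(Complex.I * n) := by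
        rw [div_eq_iff h2π]; push_cast; ring
      rw [smul_eq_mul, hconst] at hint
      linear_combination hint
    rw [hco n, hco' n]
    simp only [smul_eq_mul]
    rw [hIF', mul_smul_comm]
  -- zeroth coefficient vanishes
  have c0 : fourierCoeff (⇑g) 0 = 0 := by
    rw [hco 0]
    have : (∫ x in (-π)..π, fourier (-(0:ℤ)) (x : AddCircle (2 * π)) • F x)
        = ((∫ x in (-π)..π, f x : ℝ) : ℂ) := by
      rw [← intervalIntegral.integral_ofReal]
      apply intervalIntegral.integral_congr
      intro x _
      simp [hFdef]
    rw [this, hmean]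
    simp
  obtain ⟨S, P⟩ := parseval_cont g
  obtain ⟨S', P'⟩ := parseval_cont g'
  have hterm : ∀ n : ℤ, ‖fourierCoeff (⇑g) n‖ ^ 2 ≤ ‖fourierCoeff (⇑g') n‖ ^ 2 := by
    intro n
    rcases eq_or_ne n 0 with hn | hn
    · rw [hn, c0]; simp
    · rw [key n]
      have h1 : (1:ℝ) ≤ |(n:ℝ)| := by
        rw [← Int.cast_abs]
        exact_mod_cast Int.one_le_abs hn
      have : ‖Complex.I * n * fourierCoeff (⇑g) n‖ = |(n:ℝ)| * ‖fourierCoeff (⇑g) n‖ := by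
        rw [norm_mul, norm_mul, Complex.norm_I, one_mul, Complex.norm_intCast]
      rw [this, mul_pow]
      have h2 : (1:ℝ) ≤ |(n:ℝ)| ^ 2 := one_le_pow₀ h1
      nlinarith [sq_nonneg ‖fourierCoeff (⇑g) n‖, h2]
  have hsum_le : ∑' n : ℤ, ‖fourierCoeff (⇑g) n‖ ^ 2 ≤ ∑' n : ℤ, ‖fourierCoeff (⇑g') n‖ ^ 2 :=
    Summable.tsum_le_tsum hterm S S'
  have hIf : ∫ x in (-π)..π, f x ^ 2 = ∫ x in (-π)..π, ‖F x‖ ^ 2 := by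
    apply intervalIntegral.integral_congr
    intro x _
    simp [hFdef, Complex.norm_real, _root_.sq_abs]
  have hIf' : ∫ x in (-π)..π, f' x ^ 2 = ∫ x in (-π)..π, ‖F' x‖ ^ 2 := by
    apply intervalIntegral.integral_congr
    intro x _
    simp [hF'def, Complex.norm_real, _root_.sq_abs]
  rw [hIf, hIf', circle_integral_eq hpF hFc, circle_integral_eq hpF' hF'c, ← P, ← P']
  have hpos : (0:ℝ) ≤ 2 * π := by positivity
  exact mul_le_mul_of_nonneg_left hsum_le hpos

/-- Cauchy–Schwarz on the interval. -/
lemma cs_interval {g : ℝ → ℝ} (hg : Continuous g) :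
    (∫ x in (-π)..π, g x) ^ 2 ≤ (2 * π) * ∫ x in (-π)..π, g x ^ 2 := by
  have hle : (-π : ℝ) ≤ π := by linarith [Real.pi_pos]
  have hL : (0:ℝ) < 2 * π := by positivity
  set I := ∫ x in (-π)..π, g x with hI
  set J := ∫ x in (-π)..π, g x ^ 2 with hJ
  have key : ∀ t : ℝ, 0 ≤ J + 2 * t * I + t ^ 2 * (2 * π) := by
    intro t
    have h0 : 0 ≤ ∫ x in (-π)..π, (g x + t) ^ 2 :=
      intervalIntegral.integral_nonneg hle (fun x _ => sq_nonneg _)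
    have hexp : ∫ x in (-π)..π, (g x + t) ^ 2 = J + 2 * t * I + t ^ 2 * (2 * π) := by
      have h1 : ∀ x, (g x + t) ^ 2 = g x ^ 2 + (2 * t) * g x + t ^ 2 := fun x => by ring
      simp_rw [h1]
      rw [intervalIntegral.integral_add (f := fun x => g x ^ 2 + (2 * t) * g x) (g := fun _ => t ^ 2)
          (((hg.pow 2).add ((continuous_const.mul hg))).intervalIntegrable _ _)
          (continuous_const.intervalIntegrable _ _),
        intervalIntegral.integral_add (f := fun x => g x ^ 2) (g := fun x => (2 * t) * g x)
          ((hg.pow 2).intervalIntegrable _ _)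
          ((continuous_const.mul hg).intervalIntegrable _ _),
        intervalIntegral.integral_const_mul, intervalIntegral.integral_const]
      rw [← hI, ← hJ]
      ring_nf
    rw [hexp] at h0
    exact h0
  have h2 := key (-I / (2 * π))
  have h3 : J + 2 * (-I / (2 * π)) * I + (-I / (2 * π)) ^ 2 * (2 * π) = J - I ^ 2 / (2 * π) := by
    field_simp
    ring
  rw [h3] at h2
  have h4 : I ^ 2 / (2 * π) ≤ J := by linarith
  rw [div_le_iff₀ hL] at h4
  linarith [h4]

lemma continuous_mk2 : Continuous (fun p : ℝ × ℝ => (![p.1, p.2] : Vec2)) := by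
  apply continuous_pi
  intro i
  fin_cases i
  · simpa using continuous_fst
  · simpa using continuous_snd

lemma vec2_eta (v : Vec2) : (![v 0, v 1] : Vec2) = v := by
  funext i; fin_cases i <;> rfl

/-- Integral over the square as iterated interval integrals. -/
lemma integral_Omega2 {h : Vec2 → ℝ} (hc : Continuous h) :
    ∫ v in Omega2, h v = ∫ s in (-π)..π, ∫ t in (-π)..π, h ![s, t] := by
  have hle : (-π : ℝ) ≤ π := by linarith [Real.pi_pos]
  set g : ℝ × ℝ → ℝ := fun p => h ![p.1, p.2] with hgdef
  have hgc : Continuous g := hc.comp continuous_mk2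
  have hpre : (MeasurableEquiv.finTwoArrow : Vec2 ≃ᵐ ℝ × ℝ) ⁻¹'
      (Set.Icc (-π) π ×ˢ Set.Icc (-π) π) = Omega2 := by
    ext v
    simp [Omega2, Set.mem_Icc, Pi.le_def, Fin.forall_fin_two, MeasurableEquiv.finTwoArrow,
      finTwoArrowEquiv]
  have step1 : ∫ v in Omega2, h v
      = ∫ p in Set.Icc (-π) π ×ˢ Set.Icc (-π) π, g p := by
    rw [← hpre]
    rw [← (volume_preserving_finTwoArrow ℝ).setIntegral_preimage_emb
      (MeasurableEquiv.measurableEmbedding _) g _]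
    apply setIntegral_congr_fun
      (MeasurableEquiv.finTwoArrow.measurable (measurableSet_Icc.prod measurableSet_Icc))
    intro v _
    show h v = h ![v 0, v 1]
    rw [vec2_eta]
  have hint : IntegrableOn g (Set.Icc (-π) π ×ˢ Set.Icc (-π) π) := by
    apply hgc.continuousOn.integrableOn_compact (isCompact_Icc.prod isCompact_Icc)
  have step2 : ∫ p in Set.Icc (-π) π ×ˢ Set.Icc (-π) π, g p
      = ∫ s in Set.Icc (-π) π, ∫ t in Set.Icc (-π) π, g (s, t) := by
    rw [MeasureTheory.Measure.volume_eq_prod] at hint ⊢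
    exact setIntegral_prod g hint
  rw [step1, step2]
  rw [integral_Icc_eq_integral_Ioc, ← intervalIntegral.integral_of_le hle]
  apply intervalIntegral.integral_congr
  intro s _
  show ∫ t in Set.Icc (-π) π, g (s, t) = ∫ t in (-π)..π, h ![s, t]
  rw [integral_Icc_eq_integral_Ioc, ← intervalIntegral.integral_of_le hle]

lemma continuous_mk2_fst (t : ℝ) : Continuous (fun s : ℝ => (![s, t] : Vec2)) :=
  continuous_mk2.comp (continuous_id.prodMk continuous_const)

lemma continuous_mk2_snd (s : ℝ) : Continuous (fun t : ℝ => (![s, t] : Vec2)) :=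
  continuous_mk2.comp (continuous_const.prodMk continuous_id)

lemma pderiv2_cont {e : Vec2 → ℝ} (he : ContDiff ℝ 1 e) (i : Fin 2) :
    Continuous (pderiv2 i e) :=
  (he.continuous_fderiv one_ne_zero).clm_apply continuous_const

lemma hasDerivAt_e_fst {e : Vec2 → ℝ} (he : ContDiff ℝ 1 e) (s t : ℝ) :
    HasDerivAt (fun s' => e ![s', t]) (pderiv2 0 e ![s, t]) s := by
  have hline : HasDerivAt (fun s' : ℝ => (![s', t] : Vec2)) (Pi.single 0 1) s := by
    have heq : (fun s' : ℝ => (![s', t] : Vec2))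
        = fun s' => (![0, t] : Vec2) + s' • (Pi.single 0 1 : Vec2) := by
      funext s' i
      fin_cases i <;> simp
    rw [heq]
    simpa using ((hasDerivAt_id s).smul_const (Pi.single 0 1 : Vec2)).const_add (![0, t] : Vec2)
  exact ((he.differentiable one_ne_zero ![s, t]).hasFDerivAt).comp_hasDerivAt s hline

lemma hasDerivAt_e_snd {e : Vec2 → ℝ} (he : ContDiff ℝ 1 e) (s t : ℝ) :
    HasDerivAt (fun t' => e ![s, t']) (pderiv2 1 e ![s, t]) t := by
  have hline : HasDerivAt (fun t' : ℝ => (![s, t'] : Vec2)) (Pi.single 1 1) t := by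
    have heq : (fun t' : ℝ => (![s, t'] : Vec2))
        = fun t' => (![s, 0] : Vec2) + t' • (Pi.single 1 1 : Vec2) := by
      funext t' i
      fin_cases i <;> simp
    rw [heq]
    simpa using ((hasDerivAt_id t).smul_const (Pi.single 1 1 : Vec2)).const_add (![s, 0] : Vec2)
  exact ((he.differentiable one_ne_zero ![s, t]).hasFDerivAt).comp_hasDerivAt t hline

lemma pderiv2_per {e : Vec2 → ℝ} (he : ContDiff ℝ 1 e) (hpe : Per2 e) (i : Fin 2) :
    Per2 (pderiv2 i e) := by
  intro v k
  set c : Vec2 := (fun j => 2 * π * (k j : ℝ)) with hc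
  have hec : (fun w => e (w + c)) = e := funext fun w => hpe w k
  have h1 : HasFDerivAt e (fderiv ℝ e (v + c)) (v + c) :=
    (he.differentiable one_ne_zero _).hasFDerivAt
  have h2 : HasFDerivAt (fun w => e (w + c)) (fderiv ℝ e (v + c)) v := by
    have := h1.comp v ((hasFDerivAt_id v).add_const c)
    simpa [Function.comp_def] using this
  rw [hec] at h2
  have h3 : fderiv ℝ e (v + c) = fderiv ℝ e v :=
    h2.unique (he.differentiable one_ne_zero v).hasFDerivAt
  show fderiv ℝ e (v + c) (Pi.single i 1) = fderiv ℝ e v (Pi.single i 1)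
  rw [h3]

lemma per_fst {e : Vec2 → ℝ} (hpe : Per2 e) (t : ℝ) :
    Function.Periodic (fun s => e ![s, t]) (2 * π) := by
  intro s
  have h := hpe ![s, t] ![1, 0]
  have heq : (![s, t] + fun i => 2 * π * ((![1, 0] : Fin 2 → ℤ) i : ℝ)) = ![s + 2 * π, t] := by
    funext i
    fin_cases i <;> simp
  rw [heq] at h
  exact h

lemma per_snd {e : Vec2 → ℝ} (hpe : Per2 e) (s : ℝ) :
    Function.Periodic (fun t => e ![s, t]) (2 * π) := by
  intro t
  have h := hpe ![s, t] ![0, 1]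
  have heq : (![s, t] + fun i => 2 * π * ((![0, 1] : Fin 2 → ℤ) i : ℝ)) = ![s, t + 2 * π] := by
    funext i
    fin_cases i <;> simp
  rw [heq] at h
  exact h
/-- Poincaré–Wirtinger inequality on the `2π`-periodic square.
For `e : ℝ² → ℝ` continuously differentiable, `2π`-periodic and with zero mean on `Ω`,
`∫_Ω ‖∇e‖² ≥ ∫_Ω e²`. -/
theorem poincare_periodic_square
    (e : Vec2 → ℝ) (he : ContDiff ℝ 1 e) (hpe : Per2 e)
    (hmean : ∫ x in Omega2, e x = 0) :
    ∫ x in Omega2, (e x) ^ 2 ≤ ∫ x in Omega2, ∑ i, (pderiv2 i e x) ^ 2 := by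
  have hπ : (0:ℝ) < π := Real.pi_pos
  have hle : (-π:ℝ) ≤ π := by linarith
  have hT : (0:ℝ) < 2 * π := by positivity
  have hec : Continuous e := he.continuous
  have hp0c : Continuous (pderiv2 0 e) := pderiv2_cont he 0
  have hp1c : Continuous (pderiv2 1 e) := pderiv2_cont he 1
  set m : ℝ → ℝ := fun s => (1/(2*π)) * ∫ t in (-π)..π, e ![s, t] with hm
  set M : ℝ → ℝ := fun s => (1/(2*π)) * ∫ t in (-π)..π, pderiv2 0 e ![s, t] with hM
  have hmc : Continuous m := by
    apply continuous_const.mul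
    exact intervalIntegral.continuous_parametric_intervalIntegral_of_continuous'
      (f := fun s t => e ![s, t]) (by exact hec.comp continuous_mk2) (-π) π
  have hMc : Continuous M := by
    apply continuous_const.mul
    exact intervalIntegral.continuous_parametric_intervalIntegral_of_continuous'
      (f := fun s t => pderiv2 0 e ![s, t]) (by exact hp0c.comp continuous_mk2) (-π) π
  -- the t-average of e over the period
  have havg : ∀ s : ℝ, ∫ t in (-π)..π, e ![s, t] = 2 * π * m s := by
    intro s
    rw [hm]
    field_simp
  -- inner Wirtinger inequality, for each fixed s
  have A : ∀ s : ℝ, ∫ t in (-π)..π, (e ![s,t])^2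
      ≤ (∫ t in (-π)..π, (pderiv2 1 e ![s,t])^2) + 2*π*(m s)^2 := by
    intro s
    have huc : Continuous fun t => e ![s, t] := hec.comp (continuous_mk2_snd s)
    have hf : ∀ t, HasDerivAt (fun t' => e ![s,t'] - m s) (pderiv2 1 e ![s,t]) t :=
      fun t => (hasDerivAt_e_snd he s t).sub_const (m s)
    have hf'c : Continuous fun t => pderiv2 1 e ![s,t] := hp1c.comp (continuous_mk2_snd s)
    have hper : Function.Periodic (fun t' => e ![s,t'] - m s) (2*π) := fun t =>
      congrArg (· - m s) (per_snd hpe s t)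
    have hmean0 : ∫ t in (-π)..π, (e ![s,t] - m s) = 0 := by
      rw [intervalIntegral.integral_sub (huc.intervalIntegrable _ _)
        (intervalIntegrable_const), intervalIntegral.integral_const, havg s]
      simp [smul_eq_mul]
      ring
    have W := wirtinger1d hf hf'c hper hmean0
    have hexp : ∫ t in (-π)..π, (e ![s,t] - m s)^2
        = (∫ t in (-π)..π, (e ![s,t])^2) - 2*π*(m s)^2 := by
      have h1 : ∀ t:ℝ, (e ![s,t] - m s)^2
          = (e ![s,t])^2 - (2*(m s))*(e ![s,t]) + (m s)^2 := fun t => by ring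
      simp_rw [h1]
      rw [intervalIntegral.integral_add
          (f := fun t => (e ![s,t])^2 - (2*(m s))*(e ![s,t])) (g := fun _ => (m s)^2)
          (((huc.pow 2).sub (continuous_const.mul huc)).intervalIntegrable _ _)
          (intervalIntegrable_const),
        intervalIntegral.integral_sub (f := fun t => (e ![s,t])^2) (g := fun t => (2*(m s))*(e ![s,t]))
          ((huc.pow 2).intervalIntegrable _ _)
          ((continuous_const.mul huc).intervalIntegrable _ _),
        intervalIntegral.integral_const_mul, havg s, intervalIntegral.integral_const]
      simp [smul_eq_mul]
      ring
    rw [hexp] at W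
    linarith
  -- derivative of the average
  have hm'raw : ∀ s₀ : ℝ, HasDerivAt (fun s => ∫ t in (-π)..π, e ![s,t])
      (∫ t in (-π)..π, pderiv2 0 e ![s₀,t]) s₀ := by
    intro s₀
    have hK : IsCompact (Set.Icc (s₀-1) (s₀+1) ×ˢ Set.uIcc (-π) π) :=
      isCompact_Icc.prod isCompact_uIcc
    obtain ⟨C, hC⟩ := hK.exists_bound_of_continuousOn
      ((hp0c.comp continuous_mk2).continuousOn)
    have hder := intervalIntegral.hasDerivAt_integral_of_dominated_loc_of_deriv_le
      (μ := volume) (F := fun s t => e ![s,t]) (F' := fun s t => pderiv2 0 e ![s,t]) (x₀ := s₀)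
      (a := -π) (b := π) (bound := fun _ => C) (s := Metric.ball s₀ 1) (Metric.ball_mem_nhds s₀ one_pos)
      (Eventually.of_forall fun s =>
        ((hec.comp (continuous_mk2_snd s)).aestronglyMeasurable).restrict)
      ((hec.comp (continuous_mk2_snd s₀)).intervalIntegrable _ _)
      ((hp0c.comp (continuous_mk2_snd s₀)).aestronglyMeasurable.restrict)
      (ae_of_all _ (fun t ht x hx => by
        have hx' : x ∈ Set.Icc (s₀-1) (s₀+1) := by
          rw [Metric.mem_ball, Real.dist_eq, abs_lt] at hx
          constructor <;> linarith [hx.1, hx.2]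
        have ht' : t ∈ Set.uIcc (-π) π := Set.uIoc_subset_uIcc ht
        have := hC ((x, t)) (Set.mk_mem_prod hx' ht')
        simpa using this))
      (intervalIntegrable_const)
      (ae_of_all _ (fun t ht x hx => hasDerivAt_e_fst he x t))
    exact hder.2
  have hm' : ∀ s : ℝ, HasDerivAt m (M s) s := by
    intro s
    simpa [hm, hM] using (hm'raw s).const_mul (1/(2*π))
  have hmper : Function.Periodic m (2*π) := by
    intro s
    simp only [hm]
    congr 1
    apply intervalIntegral.integral_congr
    intro t _
    exact per_fst hpe t s
  have hmmean : ∫ s in (-π)..π, m s = 0 := by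
    rw [integral_Omega2 hec] at hmean
    simp only [hm]
    rw [intervalIntegral.integral_const_mul, hmean, mul_zero]
  have W2 : ∫ s in (-π)..π, (m s)^2 ≤ ∫ s in (-π)..π, (M s)^2 :=
    wirtinger1d hm' hMc hmper hmmean
  -- Cauchy–Schwarz pointwise bound
  have B : ∀ s : ℝ, 2*π*(M s)^2 ≤ ∫ t in (-π)..π, (pderiv2 0 e ![s,t])^2 := by
    intro s
    have hcs := cs_interval (g := fun t => pderiv2 0 e ![s,t]) (hp0c.comp (continuous_mk2_snd s))
    have hMs : M s = (1/(2*π)) * ∫ t in (-π)..π, pderiv2 0 e ![s,t] := rfl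
    rw [hMs]
    set I0 := ∫ t in (-π)..π, pderiv2 0 e ![s,t]
    set J0 := ∫ t in (-π)..π, (pderiv2 0 e ![s,t])^2
    have heq : 2*π*((1/(2*π)) * I0)^2 = I0^2 / (2*π) := by
      field_simp
    rw [heq, div_le_iff₀ hT]
    nlinarith [hcs]
  -- continuity of the parametric integrals appearing below
  have hcu2 : Continuous fun s => ∫ t in (-π)..π, (e ![s,t])^2 :=
    intervalIntegral.continuous_parametric_intervalIntegral_of_continuous'
      (f := fun s t => (e ![s,t])^2) (by exact (hec.comp continuous_mk2).pow 2) (-π) π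
  have hcp0 : Continuous fun s => ∫ t in (-π)..π, (pderiv2 0 e ![s,t])^2 :=
    intervalIntegral.continuous_parametric_intervalIntegral_of_continuous'
      (f := fun s t => (pderiv2 0 e ![s,t])^2) (by exact (hp0c.comp continuous_mk2).pow 2) (-π) π
  have hcp1 : Continuous fun s => ∫ t in (-π)..π, (pderiv2 1 e ![s,t])^2 :=
    intervalIntegral.continuous_parametric_intervalIntegral_of_continuous'
      (f := fun s t => (pderiv2 1 e ![s,t])^2) (by exact (hp1c.comp continuous_mk2).pow 2) (-π) π
  -- assemble
  have step1 : ∫ s in (-π)..π, ∫ t in (-π)..π, (e ![s,t])^2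
      ≤ ∫ s in (-π)..π, ((∫ t in (-π)..π, (pderiv2 1 e ![s,t])^2) + 2*π*(m s)^2) := by
    apply intervalIntegral.integral_mono_on hle
      (hcu2.intervalIntegrable _ _)
      ((hcp1.add ((continuous_const.mul (hmc.pow 2)))).intervalIntegrable _ _)
    intro s _
    exact A s
  have step2 : ∫ s in (-π)..π, ((∫ t in (-π)..π, (pderiv2 1 e ![s,t])^2) + 2*π*(m s)^2)
      = (∫ s in (-π)..π, ∫ t in (-π)..π, (pderiv2 1 e ![s,t])^2)
        + 2*π * ∫ s in (-π)..π, (m s)^2 := by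
    rw [intervalIntegral.integral_add
      (f := fun s => ∫ t in (-π)..π, (pderiv2 1 e ![s,t])^2) (g := fun s => 2*π*(m s)^2)
      (hcp1.intervalIntegrable _ _)
      ((continuous_const.mul (hmc.pow 2)).intervalIntegrable _ _),
      intervalIntegral.integral_const_mul]
  have step3 : 2*π * ∫ s in (-π)..π, (m s)^2 ≤ 2*π * ∫ s in (-π)..π, (M s)^2 :=
    mul_le_mul_of_nonneg_left W2 (le_of_lt hT)
  have step4 : 2*π * ∫ s in (-π)..π, (M s)^2
      ≤ ∫ s in (-π)..π, ∫ t in (-π)..π, (pderiv2 0 e ![s,t])^2 := by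
    rw [← intervalIntegral.integral_const_mul]
    apply intervalIntegral.integral_mono_on hle
      ((continuous_const.mul (hMc.pow 2)).intervalIntegrable _ _)
      (hcp0.intervalIntegrable _ _)
    intro s _
    exact B s
  have hLHS : ∫ x in Omega2, (e x) ^ 2 = ∫ s in (-π)..π, ∫ t in (-π)..π, (e ![s,t])^2 :=
    integral_Omega2 (hec.pow 2)
  have hRHS : ∫ x in Omega2, ∑ i, (pderiv2 i e x) ^ 2
      = ∫ s in (-π)..π, ((∫ t in (-π)..π, (pderiv2 0 e ![s,t])^2)
        + ∫ t in (-π)..π, (pderiv2 1 e ![s,t])^2) := by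
    have hc : Continuous fun v : Vec2 => ∑ i, (pderiv2 i e v) ^ 2 := by
      have : (fun v : Vec2 => ∑ i, (pderiv2 i e v) ^ 2)
          = fun v => (pderiv2 0 e v)^2 + (pderiv2 1 e v)^2 := by
        funext v
        rw [Fin.sum_univ_two]
      rw [this]
      exact (hp0c.pow 2).add (hp1c.pow 2)
    rw [integral_Omega2 hc]
    apply intervalIntegral.integral_congr
    intro s _
    show ∫ t in (-π)..π, ∑ i, (pderiv2 i e ![s,t])^2
      = (∫ t in (-π)..π, (pderiv2 0 e ![s,t])^2) + ∫ t in (-π)..π, (pderiv2 1 e ![s,t])^2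
    have i0 : IntervalIntegrable (fun t => (pderiv2 0 e ![s,t])^2) volume (-π) π := by
      apply Continuous.intervalIntegrable
      exact (hp0c.comp (continuous_mk2_snd s)).pow 2
    have i1 : IntervalIntegrable (fun t => (pderiv2 1 e ![s,t])^2) volume (-π) π := by
      apply Continuous.intervalIntegrable
      exact (hp1c.comp (continuous_mk2_snd s)).pow 2
    rw [← intervalIntegral.integral_add i0 i1]
    apply intervalIntegral.integral_congr
    intro t _
    show ∑ i, (pderiv2 i e ![s,t])^2 = (pderiv2 0 e ![s,t])^2 + (pderiv2 1 e ![s,t])^2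
    rw [Fin.sum_univ_two]
  have hsplit : ∫ s in (-π)..π, ((∫ t in (-π)..π, (pderiv2 0 e ![s,t])^2)
        + ∫ t in (-π)..π, (pderiv2 1 e ![s,t])^2)
      = (∫ s in (-π)..π, ∫ t in (-π)..π, (pderiv2 0 e ![s,t])^2)
        + ∫ s in (-π)..π, ∫ t in (-π)..π, (pderiv2 1 e ![s,t])^2 :=
    intervalIntegral.integral_add (hcp0.intervalIntegrable _ _) (hcp1.intervalIntegrable _ _)
  rw [hLHS, hRHS, hsplit]
  linarith [step1, step2, step3, step4]
end
end
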